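/- Let k be odd and let G be the binary graph on n = 2^(k−1) − 1 vertices whose vertices are the odd-weight vectors in F₂^k other than the all-ones vector, with u ~ v iff ⟨u,v⟩ = 1. Then for any two distinct adjacent vertices u, v the number of common neighbors is 2^(k−3) − 3, and for any two distinct non-adjacent vertices it is 2^(k−3) − 1. -/

import Mathlib

/-- The vertices of the binary graph: binary `k`-tuples with an odd number of ones
(equivalently, summing to `1` over `F₂`), excluding the all-ones vector. -/
def BinaryVertex (k : ℕ) : Type :=
  {v : Fin k → ZMod 2 // (∑ i, v i) = 1 ∧ v ≠ fun _ => 1}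

/-- The binary graph: `u` is adjacent to `v` iff `u ≠ v` and `⟨u, v⟩ = 1` over `F₂`. -/
def binaryGraph (k : ℕ) : SimpleGraph (BinaryVertex k) where
  Adj u v := u ≠ v ∧ (∑ i, u.1 i * v.1 i) = 1
  symm := by
    refine ⟨?_⟩
    rintro u v ⟨h1, h2⟩
    refine ⟨h1.symm, ?_⟩
    calc (∑ i, v.1 i * u.1 i) = ∑ i, u.1 i * v.1 i :=
          Finset.sum_congr rfl fun i _ => mul_comm _ _
      _ = 1 := h2
  loopless := by
    refine ⟨?_⟩
    rintro v ⟨h1, -⟩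
    exact h1 rfl

lemma zmod2_cases (x : ZMod 2) : x = 0 ∨ x = 1 := by revert x; decide

lemma zmod2_add_eq_zero {x y : ZMod 2} (h : x + y = 0) : x = y := by
  revert h; revert x y; decide

lemma zmod2_mul_self (x : ZMod 2) : x * x = x := by revert x; decide

/-- linear independence of the three vectors `1, U, V`. -/
lemma binaryAux_li (k : ℕ) (hk3 : 3 ≤ k) (hk1 : (k : ZMod 2) = 1)
    (U V : Fin k → ZMod 2) (hU1 : (∑ i, U i) = 1) (hV1 : (∑ i, V i) = 1)
    (hUo : U ≠ fun _ => 1) (hVo : V ≠ fun _ => 1) (hUV : U ≠ V) :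
    LinearIndependent (ZMod 2) ![(fun _ => (1 : ZMod 2) : Fin k → ZMod 2), U, V] := by
  rw [Fintype.linearIndependent_iff]
  intro g hg
  rw [Fin.sum_univ_three] at hg
  simp only [Matrix.cons_val_zero, Matrix.cons_val_one, Matrix.head_cons,
    Matrix.cons_val_two, Matrix.tail_cons] at hg
  rcases zmod2_cases (g 0) with h0 | h0 <;> rcases zmod2_cases (g 1) with h1 | h1 <;>
    rcases zmod2_cases (g 2) with h2 | h2 <;>
    rw [h0, h1, h2] at hg <;>
    simp only [one_smul, zero_smul, add_zero, zero_add] at hg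
  · intro i; fin_cases i <;> assumption
  · -- V = 0
    exfalso; rw [hg] at hV1; simp at hV1
  · -- U = 0
    exfalso; rw [hg] at hU1; simp at hU1
  · -- U + V = 0
    exact absurd (funext fun i => zmod2_add_eq_zero (congrFun hg i)) hUV
  · -- one = 0
    exfalso
    have := congrFun hg ⟨0, by omega⟩
    simp at this
  · -- one + V = 0
    exact absurd (funext fun i => zmod2_add_eq_zero (congrFun hg i)).symm hVo
  · -- one + U = 0
    exact absurd (funext fun i => zmod2_add_eq_zero (congrFun hg i)).symm hUo
  · -- one + U + V = 0
    exfalso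
    have hs := congrArg (fun f => ∑ i, f i) hg
    simp only [Pi.add_apply, Finset.sum_add_distrib, hU1, hV1, Finset.sum_const,
      Finset.card_univ, Fintype.card_fin, nsmul_eq_mul, mul_one, Pi.zero_apply,
      Finset.sum_const_zero] at hs
    rw [hk1] at hs
    exact absurd hs (by decide)

/-- fibers of a surjective 3-row full-rank matrix over `F₂` have `2^(k-3)` points. -/
lemma binaryAux_fiber (k : ℕ) (hk3 : 3 ≤ k) (M : Matrix (Fin 3) (Fin k) (ZMod 2))
    (hli : LinearIndependent (ZMod 2) (fun i => M i)) (b : Fin 3 → ZMod 2) :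
    Nat.card {x : Fin k → ZMod 2 // M.mulVec x = b} = 2 ^ (k - 3) := by
  haveI : Fintype ↥(LinearMap.ker M.mulVecLin) := Fintype.ofFinite _
  have hrank : M.rank = 3 := by
    rw [← Matrix.rank_transpose, Matrix.rank_eq_finrank_span_cols]
    have h2 := finrank_span_eq_card hli
    exact h2.trans (by simp)
  have hrange : LinearMap.range M.mulVecLin = ⊤ := by
    apply Submodule.eq_top_of_finrank_eq
    have : Module.finrank (ZMod 2) ↥(LinearMap.range M.mulVecLin) = M.rank := rfl
    rw [this, hrank, Module.finrank_pi]
    simp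
  have hsurj : Function.Surjective M.mulVecLin := LinearMap.range_eq_top.mp hrange
  have hker : Module.finrank (ZMod 2) (LinearMap.ker M.mulVecLin) = k - 3 := by
    have h := LinearMap.finrank_range_add_finrank_ker M.mulVecLin
    have h1 : Module.finrank (ZMod 2) ↥(LinearMap.range M.mulVecLin) = 3 := by
      rw [show Module.finrank (ZMod 2) ↥(LinearMap.range M.mulVecLin) = M.rank from rfl, hrank]
    have h2 : Module.finrank (ZMod 2) (Fin k → ZMod 2) = k := by
      rw [Module.finrank_pi]; simp
    rw [h1, h2] at h
    omega
  have hcardker : Nat.card (LinearMap.ker M.mulVecLin) = 2 ^ (k - 3) := by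
    have := Module.card_eq_pow_finrank (K := ZMod 2) (V := LinearMap.ker M.mulVecLin)
    rw [hker] at this
    rw [Nat.card_eq_fintype_card, this, ZMod.card]
  obtain ⟨x₀, hx₀⟩ := hsurj b
  rw [← hcardker]
  apply Nat.card_congr
  refine ⟨fun s => ⟨s.1 - x₀, ?_⟩, fun t => ⟨x₀ + t.1, ?_⟩, fun s => by ext; simp,
    fun t => by ext; simp⟩
  · simp only [LinearMap.mem_ker, map_sub, Matrix.mulVecLin_apply, s.2, hx₀]
    simp [show M.mulVecLin x₀ = b from hx₀]
  · have ht := t.2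
    rw [LinearMap.mem_ker] at ht
    show M.mulVec (x₀ + t.1) = b
    rw [Matrix.mulVec_add, show M.mulVec t.1 = 0 from ht, show M.mulVec x₀ = b from hx₀]
    simp

/-- In the binary graph (odd `k`), any two distinct adjacent vertices have
exactly `2^(k−3) − 3` common neighbors, and any two distinct non-adjacent vertices have
exactly `2^(k−3) − 1` common neighbors. -/
theorem binaryGraph_commonNeighbors_card (k : ℕ) (hk : Odd k)
    (u v : BinaryVertex k) (huv : u ≠ v) :
    ((binaryGraph k).Adj u v →
      Nat.card ((binaryGraph k).commonNeighbors u v) = 2 ^ (k - 3) - 3) ∧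
    (¬ (binaryGraph k).Adj u v →
      Nat.card ((binaryGraph k).commonNeighbors u v) = 2 ^ (k - 3) - 1) := by
  classical
  obtain ⟨m, hm⟩ := hk
  have hU1 : (∑ i, u.1 i) = 1 := u.2.1
  have hV1 : (∑ i, v.1 i) = 1 := v.2.1
  have hUo : u.1 ≠ fun _ => 1 := u.2.2
  have hVo : v.1 ≠ fun _ => 1 := v.2.2
  have hUV : u.1 ≠ v.1 := fun h => huv (Subtype.ext h)
  have hkne1 : k ≠ 1 := by
    intro h
    subst h
    apply hUo
    funext i
    rw [show i = 0 from Subsingleton.elim i 0]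
    rwa [Fin.sum_univ_one] at hU1
  have hk3 : 3 ≤ k := by omega
  have hk1 : (k : ZMod 2) = 1 := by
    rw [hm]; push_cast
    rw [show ((2 : ZMod 2)) = 0 by decide]; ring
  have honesum : (∑ _i : Fin k, (1 : ZMod 2)) = 1 := by
    simp only [Finset.sum_const, Finset.card_univ, Fintype.card_fin, nsmul_eq_mul, mul_one]
    exact hk1
  set M : Matrix (Fin 3) (Fin k) (ZMod 2) := Matrix.of ![fun _ => 1, u.1, v.1] with hM
  have hli : LinearIndependent (ZMod 2) (fun i => M i) := by
    have h := binaryAux_li k hk3 hk1 u.1 v.1 hU1 hV1 hUo hVo hUV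
    convert h using 1
    rfl
  have hmem : ∀ x : Fin k → ZMod 2, M.mulVec x = (fun _ => 1) ↔
      ((∑ i, x i) = 1 ∧ (∑ i, u.1 i * x i) = 1 ∧ (∑ i, v.1 i * x i) = 1) := by
    intro x
    constructor
    · intro h
      refine ⟨?_, ?_, ?_⟩
      · have := congrFun h 0
        simpa [hM, Matrix.mulVec, dotProduct] using this
      · have := congrFun h 1
        simpa [hM, Matrix.mulVec, dotProduct] using this
      · have := congrFun h 2
        simpa [hM, Matrix.mulVec, dotProduct] using this
    · rintro ⟨h1, h2, h3⟩
      funext i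
      fin_cases i <;>
        simp [hM, Matrix.mulVec, dotProduct, h1, h2, h3]
  set S : Set (Fin k → ZMod 2) := {x | M.mulVec x = fun _ => 1} with hS
  have hScard : S.ncard = 2 ^ (k - 3) := by
    rw [← Nat.card_coe_set_eq]
    exact binaryAux_fiber k hk3 M hli _
  have hSfin : S.Finite := Set.toFinite _
  have honeS : (fun _ => (1 : ZMod 2) : Fin k → ZMod 2) ∈ S := by
    rw [hS, Set.mem_setOf_eq, hmem]
    refine ⟨honesum, ?_, ?_⟩
    · simpa using hU1
    · simpa using hV1
  have hswap : ∀ x : Fin k → ZMod 2, (∑ i, x i * u.1 i) = ∑ i, u.1 i * x i := by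
    intro x; exact Finset.sum_congr rfl fun i _ => mul_comm _ _
  have hswapv : ∀ x : Fin k → ZMod 2, (∑ i, x i * v.1 i) = ∑ i, v.1 i * x i := by
    intro x; exact Finset.sum_congr rfl fun i _ => mul_comm _ _
  constructor
  · -- adjacent case
    intro hadj
    have he : (∑ i, u.1 i * v.1 i) = 1 := hadj.2
    have hev : (∑ i, v.1 i * u.1 i) = 1 := by rw [hswap v.1]; exact he
    have hUS : u.1 ∈ S := by
      rw [hS, Set.mem_setOf_eq, hmem]
      refine ⟨hU1, ?_, hev⟩
      simpa [zmod2_mul_self] using hU1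
    have hVS : v.1 ∈ S := by
      rw [hS, Set.mem_setOf_eq, hmem]
      refine ⟨hV1, he, ?_⟩
      simpa [zmod2_mul_self] using hV1
    set T : Set (Fin k → ZMod 2) := {(fun _ => 1 : Fin k → ZMod 2), u.1, v.1} with hT
    have hsub : T ⊆ S := by
      intro x hx
      rcases hx with h | h | h <;> rw [h]
      · exact honeS
      · exact hUS
      · exact hVS
    have hTcard : T.ncard = 3 := by
      rw [hT, Set.ncard_insert_of_notMem, Set.ncard_pair hUV]
      simp only [Set.mem_insert_iff, Set.mem_singleton_iff, not_or]
      exact ⟨fun h => hUo h.symm, fun h => hVo h.symm⟩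
    have hvert : ∀ x, x ∈ S \ T → ((∑ i, x i) = 1 ∧ x ≠ fun _ => 1) := by
      intro x hx
      have hxS := hx.1
      rw [hS, Set.mem_setOf_eq, hmem] at hxS
      refine ⟨hxS.1, ?_⟩
      intro h
      exact hx.2 (by rw [hT, h]; exact Set.mem_insert _ _)
    have hne3 : ∀ x, x ∈ S \ T → (x ≠ fun _ => 1) ∧ x ≠ u.1 ∧ x ≠ v.1 := by
      intro x hx
      have := hx.2
      rw [hT] at this
      simp only [Set.mem_insert_iff, Set.mem_singleton_iff, not_or] at this
      exact this
    have hmemC : ∀ x (hx : x ∈ S \ T),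
        (⟨x, hvert x hx⟩ : BinaryVertex k) ∈ (binaryGraph k).commonNeighbors u v := by
      intro x hx
      have hxS := hx.1
      rw [hS, Set.mem_setOf_eq, hmem] at hxS
      obtain ⟨-, hxu, hxv⟩ := hxS
      obtain ⟨-, hxu2, hxv2⟩ := hne3 x hx
      refine (SimpleGraph.mem_commonNeighbors (binaryGraph k)).mpr ?_
      exact ⟨⟨fun h => hxu2 (congrArg Subtype.val h).symm, hxu⟩,
        ⟨fun h => hxv2 (congrArg Subtype.val h).symm, hxv⟩⟩
    have hforward : ∀ w : BinaryVertex k, w ∈ (binaryGraph k).commonNeighbors u v →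
        w.1 ∈ S \ T := by
      intro w hw
      rw [SimpleGraph.mem_commonNeighbors] at hw
      obtain ⟨⟨hne1, hs1⟩, hne2, hs2⟩ := hw
      refine ⟨?_, ?_⟩
      · rw [hS, Set.mem_setOf_eq, hmem]
        exact ⟨w.2.1, hs1, hs2⟩
      · rw [hT]
        simp only [Set.mem_insert_iff, Set.mem_singleton_iff, not_or]
        exact ⟨w.2.2, fun h => hne1 (Subtype.ext h.symm), fun h => hne2 (Subtype.ext h.symm)⟩
    have key : Nat.card ((binaryGraph k).commonNeighbors u v) = Nat.card ↥(S \ T) :=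
      Nat.card_congr
        ⟨fun w => ⟨w.1.1, hforward w.1 w.2⟩,
         fun x => ⟨⟨x.1, hvert x.1 x.2⟩, hmemC x.1 x.2⟩,
         fun w => rfl, fun x => rfl⟩
    rw [key, Nat.card_coe_set_eq, Set.ncard_diff hsub, hScard, hTcard]
  · -- non-adjacent case
    intro hadj
    have hxneU : ∀ x, x ∈ S → x ≠ u.1 := by
      intro x hx h
      rw [hS, Set.mem_setOf_eq, hmem] at hx
      apply hadj
      refine ⟨huv, ?_⟩
      rw [← hswap v.1]
      rw [h] at hx
      exact hx.2.2
    have hxneV : ∀ x, x ∈ S → x ≠ v.1 := by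
      intro x hx h
      rw [hS, Set.mem_setOf_eq, hmem] at hx
      apply hadj
      rw [h] at hx
      exact ⟨huv, hx.2.1⟩
    set T : Set (Fin k → ZMod 2) := {(fun _ => 1 : Fin k → ZMod 2)} with hT
    have hsub : T ⊆ S := by
      intro x hx
      rw [hT, Set.mem_singleton_iff] at hx
      rw [hx]; exact honeS
    have hvert : ∀ x, x ∈ S \ T → ((∑ i, x i) = 1 ∧ x ≠ fun _ => 1) := by
      intro x hx
      have hxS := hx.1
      rw [hS, Set.mem_setOf_eq, hmem] at hxS
      exact ⟨hxS.1, fun h => hx.2 (by rw [hT, h]; exact Set.mem_singleton _)⟩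
    have hmemC : ∀ x (hx : x ∈ S \ T),
        (⟨x, hvert x hx⟩ : BinaryVertex k) ∈ (binaryGraph k).commonNeighbors u v := by
      intro x hx
      have hxS := hx.1
      rw [hS, Set.mem_setOf_eq, hmem] at hxS
      obtain ⟨-, hxu, hxv⟩ := hxS
      refine (SimpleGraph.mem_commonNeighbors (binaryGraph k)).mpr ?_
      exact ⟨⟨fun h => hxneU x hx.1 (congrArg Subtype.val h).symm, hxu⟩,
        ⟨fun h => hxneV x hx.1 (congrArg Subtype.val h).symm, hxv⟩⟩
    have hforward : ∀ w : BinaryVertex k, w ∈ (binaryGraph k).commonNeighbors u v →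
        w.1 ∈ S \ T := by
      intro w hw
      rw [SimpleGraph.mem_commonNeighbors] at hw
      obtain ⟨⟨hne1, hs1⟩, hne2, hs2⟩ := hw
      refine ⟨?_, ?_⟩
      · rw [hS, Set.mem_setOf_eq, hmem]
        exact ⟨w.2.1, hs1, hs2⟩
      · rw [hT]
        simpa using w.2.2
    have key : Nat.card ((binaryGraph k).commonNeighbors u v) = Nat.card ↥(S \ T) :=
      Nat.card_congr
        ⟨fun w => ⟨w.1.1, hforward w.1 w.2⟩,
         fun x => ⟨⟨x.1, hvert x.1 x.2⟩, hmemC x.1 x.2⟩,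
         fun w => rfl, fun x => rfl⟩
    rw [key, Nat.card_coe_set_eq, Set.ncard_diff hsub, hScard, hT, Set.ncard_singleton]
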